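/- The formal power series ring in one variable over the real quaternions is a local ring without zero-divisors, all of whose idempotents are central and whose socle as a module over its center is contained in the center, but it is not centrally essential. -/

import Mathlib

/-- A ring is *centrally essential* if, as a module over its center, it is an
essential extension of its center. -/
def IsCentrallyEssential (R : Type*) [Ring R] : Prop :=
  ∀ r : R, r ≠ 0 → ∃ c ∈ Subring.center R, c * r ≠ 0 ∧ c * r ∈ Subring.center R

/-- The socle of `R` as a module over its center. -/
def centerSocle (R : Type*) [Ring R] : Submodule (Subring.center R) R :=
  sSup {S : Submodule (Subring.center R) R | IsSimpleModule (Subring.center R) S}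

noncomputable abbrev qi : Quaternion ℝ := ⟨0,1,0,0⟩
noncomputable abbrev qj : Quaternion ℝ := ⟨0,0,1,0⟩

theorem quat_key (q : Quaternion ℝ) (h1 : q * qj = qj * q) (h2 : (q * qi) * qj = qj * (q * qi))
    (h3 : q * qi = qi * q) : q = 0 := by
  simp only [Quaternion.ext_iff, Quaternion.re_mul, Quaternion.imI_mul, Quaternion.imJ_mul,
    Quaternion.imK_mul] at h1 h2 h3 ⊢
  simp [Quaternion.re_zero, Quaternion.imI_zero, Quaternion.imJ_zero, Quaternion.imK_zero] at h1 h2 h3 ⊢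
  refine ⟨?_,?_,?_,?_⟩ <;> linarith [h1.1,h1.2,h2.1,h2.2,h3.1,h3.2]

open PowerSeries in
set_option synthInstance.maxHeartbeats 1000000 in
set_option maxHeartbeats 1000000 in
/-- The power series ring `ℍ[[X]]` over the real quaternions is a local ring
without zero divisors, all of its idempotents are central, and its socle over
its center is contained in the center, but it is not centrally essential. -/
theorem quaternion_powerSeries_not_centrallyEssential :
    IsLocalRing (PowerSeries (Quaternion ℝ)) ∧
      (∀ a b : PowerSeries (Quaternion ℝ), a * b = 0 → a = 0 ∨ b = 0) ∧
      (∀ e : PowerSeries (Quaternion ℝ), e * e = e →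
        e ∈ Subring.center (PowerSeries (Quaternion ℝ))) ∧
      (∀ x ∈ centerSocle (PowerSeries (Quaternion ℝ)),
        x ∈ Subring.center (PowerSeries (Quaternion ℝ))) ∧
      ¬ IsCentrallyEssential (PowerSeries (Quaternion ℝ)) := by
  set ℍ := Quaternion ℝ
  set R := PowerSeries ℍ with hR
  have hnzd : ∀ a b : R, a * b = 0 → a = 0 ∨ b = 0 :=
    fun a b h => eq_zero_or_eq_zero_of_mul_eq_zero h
  have hXc : (X : R) ∈ Subring.center R :=
    Subring.mem_center_iff.mpr fun g => (commute_X g).eq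
  refine ⟨?_, hnzd, ?_, ?_, ?_⟩
  · refine ⟨fun {a b} hab => ?_⟩
    by_cases h : constantCoeff a = 0
    · right
      refine isUnit_iff_constantCoeff.mpr (isUnit_iff_ne_zero.mpr ?_)
      have := congrArg (constantCoeff) hab
      simp only [map_add, h, zero_add, map_one] at this
      rw [this]; exact one_ne_zero
    · exact Or.inl <| isUnit_iff_constantCoeff.mpr (isUnit_iff_ne_zero.mpr h)
  · intro e he
    have : e * (e - 1) = 0 := by rw [mul_sub, mul_one, he, sub_self]
    rcases hnzd _ _ this with h | h
    · rw [h]; exact Subring.zero_mem _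
    · rw [sub_eq_zero.mp h]; exact Subring.one_mem _
  · intro x hx
    have hempty : {S : Submodule (Subring.center R) R |
        IsSimpleModule (Subring.center R) S} = ∅ := by
      ext S
      simp only [Set.mem_setOf_eq, Set.mem_empty_iff_false, iff_false]
      intro hS
      have hatom : IsAtom S := isSimpleModule_iff_isAtom.mp hS
      obtain ⟨x, hxS, hx0⟩ := Submodule.ne_bot_iff S |>.mp hatom.1
      set cX : Subring.center R := ⟨X, hXc⟩
      have hy0 : (X : R) * x ≠ 0 := by
        intro h
        rcases hnzd _ _ h with h | h
        · exact X_ne_zero h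
        · exact hx0 h
      have hysmul : cX • x = (X : R) * x := rfl
      have hspan : Submodule.span (Subring.center R) {(X : R) * x} = S := by
        by_contra hne
        have hle : Submodule.span (Subring.center R) {(X : R) * x} ≤ S := by
          rw [Submodule.span_le, Set.singleton_subset_iff]
          rw [← hysmul]
          exact S.smul_mem cX hxS
        have := hatom.2 _ (lt_of_le_of_ne hle hne)
        have hmem : (X : R) * x ∈ (⊥ : Submodule (Subring.center R) R) := by
          rw [← this]; exact Submodule.mem_span_singleton_self _
        exact hy0 (by simpa using hmem)
      have hxmem : x ∈ Submodule.span (Subring.center R) {(X : R) * x} := by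
        rw [hspan]; exact hxS
      obtain ⟨d, hd⟩ := Submodule.mem_span_singleton.mp hxmem
      have hd' : (d : R) * ((X : R) * x) = x := hd
      have : ((1 : R) - (d : R) * X) * x = 0 := by
        rw [sub_mul, one_mul, mul_assoc, hd', sub_self]
      rcases hnzd _ _ this with h | h
      · have h1 : (1 : R) = (d : R) * X := sub_eq_zero.mp h
        have := congrArg (constantCoeff) h1
        simp at this
      · exact hx0 h
    rw [centerSocle, hempty, sSup_empty] at hx
    simp only [Submodule.mem_bot] at hx
    rw [hx]; exact Subring.zero_mem _
  · intro h
    have hni : (qi : ℍ) ≠ 0 := by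
      simp [Quaternion.ext_iff, Quaternion.imI_zero]
    have hqi : (C qi : R) ≠ 0 := by
      intro hc
      have := congrArg (constantCoeff) hc
      rw [constantCoeff_C] at this
      rw [this] at hni
      exact hni rfl
    obtain ⟨c, hc, hne, hcent⟩ := h (C qi) hqi
    have hc' := Subring.mem_center_iff.mp hc
    have hcent' := Subring.mem_center_iff.mp hcent
    apply hne
    have hc0 : c = 0 := by
      refine PowerSeries.ext fun n => ?_
      rw [map_zero]
      apply quat_key
      · have := congrArg (PowerSeries.coeff n) (hc' (C qj))
        simpa only [coeff_C_mul, coeff_mul_C] using this.symm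
      · have := congrArg (PowerSeries.coeff n) (hcent' (C qj))
        simpa only [coeff_C_mul, coeff_mul_C] using this.symm
      · have := congrArg (PowerSeries.coeff n) (hc' (C qi))
        simpa only [coeff_C_mul, coeff_mul_C] using this.symm
    rw [hc0, zero_mul]
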